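/- Let ν_K and ν_R be probability measures on [0,∞) with finite second moments. Fix z with Im z > 0. Suppose h ∈ ℂ with Im h > 0 and k ∈ ℂ with Im k < 0 satisfy h = ∫ λ (kλ − z)⁻¹ dν_R(λ) and k = ∫ λ (hλ + 1)⁻¹ dν_K(λ). Then with A(h) = ∫ λ²/|hλ+1|² dν_K(λ) and B(k,z) = ∫ λ²/|kλ−z|² dν_R(λ) and C(k,z) = ∫ λ/|kλ−z|² dν_R(λ), one has A(h) = −Im k / Im h, B(k,z) = −Im h/Im k + (Im z/Im k)·C(k,z), and consequently 1 − A(h)B(k,z) = C(k,z)·Im z/Im h > 0. -/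

import Mathlib

open MeasureTheory Complex

/-- Identities for the imaginary parts of the solution `(h,k)` of the coupled fixed-point
system: `A(h) = −Im k/Im h`, `B(k,z) = −Im h/Im k + (Im z/Im k) C(k,z)`, and consequently
`1 − A(h)B(k,z) = C(k,z)·Im z/Im h > 0`. -/
theorem fixed_point_imaginary_part_identities
    (νK νR : Measure ℝ) [IsProbabilityMeasure νK] [IsProbabilityMeasure νR]
    (hsuppK : ∀ᵐ l ∂νK, 0 ≤ l) (hsuppR : ∀ᵐ l ∂νR, 0 ≤ l)
    (hm2K : Integrable (fun l => l ^ 2) νK) (hm2R : Integrable (fun l => l ^ 2) νR)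
    (z h k : ℂ) (hz : 0 < z.im) (hh : 0 < h.im) (hk : k.im < 0)
    (hinth : Integrable (fun l : ℝ => (l : ℂ) / (k * l - z)) νR)
    (hintk : Integrable (fun l : ℝ => (l : ℂ) / (h * l + 1)) νK)
    (heqh : h = ∫ l, (l : ℂ) / (k * l - z) ∂νR)
    (heqk : k = ∫ l, (l : ℂ) / (h * l + 1) ∂νK)
    (A B C : ℝ)
    (hA : A = ∫ l, l ^ 2 / ‖h * l + 1‖ ^ 2 ∂νK)
    (hB : B = ∫ l, l ^ 2 / ‖k * l - z‖ ^ 2 ∂νR)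
    (hC : C = ∫ l, l / ‖k * l - z‖ ^ 2 ∂νR) :
    A = -k.im / h.im ∧
      B = -h.im / k.im + (z.im / k.im) * C ∧
      1 - A * B = C * z.im / h.im ∧
      0 < C * z.im / h.im := by
  have hne : h.im ≠ 0 := ne_of_gt hh
  have kne : k.im ≠ 0 := ne_of_lt hk
  have zne : z.im ≠ 0 := ne_of_gt hz
  -- denominators are nonzero
  have dK : ∀ l : ℝ, (h * l + 1 : ℂ) ≠ 0 := by
    intro l hl
    have h1 : (h * (l : ℂ) + 1).im = h.im * l := by simp
    rw [hl] at h1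
    simp at h1
    rcases h1 with h1 | h1
    · exact hne h1
    · rw [h1] at hl; simp at hl
  have dR : ∀ l : ℝ, 0 ≤ l → (k * l - z : ℂ) ≠ 0 := by
    intro l hl h0
    have h1 : (k * (l : ℂ) - z).im = k.im * l - z.im := by simp
    rw [h0] at h1
    simp at h1
    nlinarith
  -- abs lower bounds
  have absK : ∀ l : ℝ, 0 ≤ l → l * h.im ≤ ‖h * l + 1‖ := by
    intro l hl
    have h1 := Complex.abs_im_le_norm (h * l + 1)
    have h2 : (h * (l : ℂ) + 1).im = h.im * l := by simp
    rw [h2, _root_.abs_of_nonneg (by positivity)] at h1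
    linarith [h1]
  have absR1 : ∀ l : ℝ, 0 ≤ l → z.im - k.im * l ≤ ‖k * l - z‖ := by
    intro l hl
    have h1 := Complex.abs_im_le_norm (k * l - z)
    have h2 : (k * (l : ℂ) - z).im = k.im * l - z.im := by simp
    rw [h2] at h1
    have : |k.im * l - z.im| = z.im - k.im * l := by
      rw [_root_.abs_of_nonpos (by nlinarith)]; ring
    linarith [this ▸ h1]
  -- measurability
  have mK : Measurable fun l : ℝ => l ^ 2 / ‖h * l + 1‖ ^ 2 := by
    apply (measurable_id.pow_const 2).div
    exact ((continuous_norm.comp ((continuous_const.mul Complex.continuous_ofReal : Continuous fun l : ℝ => h * (l:ℂ)).add continuous_const)).pow 2).measurable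
  have mB : Measurable fun l : ℝ => l ^ 2 / ‖k * l - z‖ ^ 2 := by
    apply (measurable_id.pow_const 2).div
    exact ((continuous_norm.comp ((continuous_const.mul Complex.continuous_ofReal : Continuous fun l : ℝ => k * (l:ℂ)).sub continuous_const)).pow 2).measurable
  have mC : Measurable fun l : ℝ => l / ‖k * l - z‖ ^ 2 := by
    apply measurable_id.div
    exact ((continuous_norm.comp ((continuous_const.mul Complex.continuous_ofReal : Continuous fun l : ℝ => k * (l:ℂ)).sub continuous_const)).pow 2).measurable
  -- integrability via boundedness
  have intA : Integrable (fun l : ℝ => l ^ 2 / ‖h * l + 1‖ ^ 2) νK := by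
    apply Integrable.mono' (integrable_const (1 / h.im ^ 2)) mK.aestronglyMeasurable
    filter_upwards [hsuppK] with l hl
    rw [Real.norm_eq_abs, _root_.abs_of_nonneg (by positivity)]
    have habs : 0 < ‖h * l + 1‖ := norm_pos_iff.2 (dK l)
    have hb := absK l hl
    rw [div_le_div_iff₀ (by positivity) (by positivity)]
    nlinarith [mul_le_mul hb hb (by positivity) habs.le]
  have intB : Integrable (fun l : ℝ => l ^ 2 / ‖k * l - z‖ ^ 2) νR := by
    apply Integrable.mono' (integrable_const (1 / k.im ^ 2)) mB.aestronglyMeasurable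
    filter_upwards [hsuppR] with l hl
    rw [Real.norm_eq_abs, _root_.abs_of_nonneg (by positivity)]
    have habs : 0 < ‖k * l - z‖ := norm_pos_iff.2 (dR l hl)
    have hb := absR1 l hl
    rw [div_le_div_iff₀ (by positivity) (by positivity)]
    nlinarith [mul_le_mul hb hb (by nlinarith) habs.le, mul_nonneg hl (neg_nonneg.2 hk.le)]
  have intC : Integrable (fun l : ℝ => l / ‖k * l - z‖ ^ 2) νR := by
    apply Integrable.mono' (integrable_const (1 / z.im ^ 2 + 1 / k.im ^ 2))
      mC.aestronglyMeasurable
    filter_upwards [hsuppR] with l hl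
    rw [Real.norm_eq_abs, _root_.abs_of_nonneg (by positivity)]
    have habs : 0 < ‖k * l - z‖ := norm_pos_iff.2 (dR l hl)
    have hb := absR1 l hl
    have hb1 : z.im ^ 2 ≤ ‖k * l - z‖ ^ 2 := by nlinarith [mul_le_mul hb hb (by nlinarith) habs.le, mul_nonneg hl (neg_nonneg.2 hk.le)]
    have hb2 : l ^ 2 * k.im ^ 2 ≤ ‖k * l - z‖ ^ 2 := by nlinarith [mul_le_mul hb hb (by nlinarith) habs.le, mul_nonneg hl (neg_nonneg.2 hk.le)]
    rw [div_add_div _ _ (by positivity) (by positivity),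
      div_le_div_iff₀ (by positivity) (by positivity)]
    nlinarith [sq_nonneg (l - 1), mul_pos (pow_pos hz 2) (pow_pos habs 2),
      mul_le_mul_of_nonneg_left hb2 (le_of_lt (pow_pos hz 2)),
      mul_le_mul_of_nonneg_left hb1 (sq_nonneg k.im)]
  -- imaginary part identities, pointwise
  have ptK : ∀ l : ℝ, ((l : ℂ) / (h * l + 1)).im
      = -h.im * (l ^ 2 / ‖h * l + 1‖ ^ 2) := by
    intro l
    rw [Complex.div_im, Complex.sq_norm]
    have h2 : (h * (l : ℂ) + 1).im = h.im * l := by simp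
    have h3 : ((l : ℂ)).im = 0 := rfl
    have h4 : ((l : ℂ)).re = l := rfl
    rw [h2, h3, h4, mul_div_assoc]
    ring_nf
  have ptR : ∀ l : ℝ, ((l : ℂ) / (k * l - z)).im
      = -k.im * (l ^ 2 / ‖k * l - z‖ ^ 2)
        + z.im * (l / ‖k * l - z‖ ^ 2) := by
    intro l
    rw [Complex.div_im, Complex.sq_norm]
    have h2 : (k * (l : ℂ) - z).im = k.im * l - z.im := by simp
    have h3 : ((l : ℂ)).im = 0 := rfl
    have h4 : ((l : ℂ)).re = l := rfl
    rw [h2, h3, h4, mul_div_assoc, mul_div_assoc]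
    ring_nf
  -- k.im = -h.im * A
  have kA : k.im = -h.im * A := by
    have h1 : (∫ l, (l : ℂ) / (h * l + 1) ∂νK).im
        = ∫ l, ((l : ℂ) / (h * l + 1)).im ∂νK := by
      simpa using (integral_im hintk).symm
    have h2 : (∫ l, ((l : ℂ) / (h * l + 1)).im ∂νK)
        = -h.im * ∫ l, l ^ 2 / ‖h * l + 1‖ ^ 2 ∂νK := by
      rw [← integral_const_mul]
      exact integral_congr_ae (Filter.Eventually.of_forall fun l => ptK l)
    rw [heqk, h1, h2, hA]
  -- h.im = -k.im * B + z.im * C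
  have hBC : h.im = -k.im * B + z.im * C := by
    have h1 : (∫ l, (l : ℂ) / (k * l - z) ∂νR).im
        = ∫ l, ((l : ℂ) / (k * l - z)).im ∂νR := by
      simpa using (integral_im hinth).symm
    have h2 : (∫ l, ((l : ℂ) / (k * l - z)).im ∂νR)
        = -k.im * (∫ l, l ^ 2 / ‖k * l - z‖ ^ 2 ∂νR)
          + z.im * ∫ l, l / ‖k * l - z‖ ^ 2 ∂νR := by
      rw [← integral_const_mul, ← integral_const_mul, ← integral_add (intB.const_mul _)
        (intC.const_mul _)]
      exact integral_congr_ae (Filter.Eventually.of_forall fun l => ptR l)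
    rw [heqh, h1, h2, hB, hC]
  have hAeq : A = -k.im / h.im := by rw [eq_div_iff hne, kA]; ring
  have hBeq : B = -h.im / k.im + (z.im / k.im) * C := by
    rw [div_mul_eq_mul_div, ← add_div, eq_div_iff kne]
    linear_combination hBC
  have halg : 1 - A * B = C * z.im / h.im := by
    rw [hAeq, hBeq]
    field_simp
    ring
  -- positivity : C > 0
  have hCnn : 0 ≤ C := by
    rw [hC]
    apply integral_nonneg_of_ae
    filter_upwards [hsuppR] with l hl
    positivity
  have hCpos : 0 < C := by
    rcases lt_or_eq_of_le hCnn with h' | h'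
    · exact h'
    exfalso
    -- C = 0 implies integrand 0 a.e., hence l = 0 a.e., hence B = 0, contradiction
    have hC0 : (fun l : ℝ => l / ‖k * l - z‖ ^ 2) =ᵐ[νR] 0 := by
      rw [← integral_eq_zero_iff_of_nonneg_ae ?_ intC]
      · rw [← hC]; exact h'.symm
      · filter_upwards [hsuppR] with l hl; positivity
    have hl0 : ∀ᵐ l ∂νR, l = 0 := by
      filter_upwards [hC0, hsuppR] with l h0 hl
      have habs : 0 < ‖k * l - z‖ := norm_pos_iff.2 (dR l hl)
      have : l / ‖k * l - z‖ ^ 2 = 0 := h0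
      rcases div_eq_zero_iff.1 this with h'' | h''
      · exact h''
      · exact absurd h'' (by positivity)
    have hB0 : B = 0 := by
      rw [hB]
      rw [integral_eq_zero_iff_of_nonneg_ae ?_ intB]
      · filter_upwards [hl0] with l h0
        simp [h0]
      · filter_upwards [hsuppR] with l hl; positivity
    rw [hB0, ← h'] at hBC
    simp at hBC
    linarith
  exact ⟨hAeq, hBeq, halg, by rw [← halg, halg]; positivity⟩
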